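/- Let X be a Tychonoff (completely regular Hausdorff) space and let Y be a real Banach space. If there is an injective continuous linear map S : Y → C_k(X) that is a homeomorphism onto its image, then there exists a compact subset K ⊆ X such that Y embeds isomorphically into the Banach space C(K) (continuous real functions on K with the supremum norm), i.e., there is an injective continuous linear map from Y into C(K) that is a homeomorphism onto its image. -/

import Mathlib

open Topology

/-- Let `X` be Tychonoff and `Y` a real Banach space. If `Y` embeds
isomorphically into `C_k(X)` (an injective continuous linear map which is a
homeomorphism onto its image), then there is a compact `K ⊆ X` such that `Y` embeds
isomorphically into `C(K)`. -/
theorem stmt11 {X : Type*} [TopologicalSpace X] [T35Space X]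
    {Y : Type*} [NormedAddCommGroup Y] [NormedSpace ℝ Y] [CompleteSpace Y]
    (S : Y →L[ℝ] C(X, ℝ)) (hSinj : Function.Injective S) (hSemb : IsEmbedding S) :
    ∃ K : Set X, IsCompact K ∧
      ∃ T : Y →L[ℝ] C(K, ℝ), Function.Injective T ∧ IsEmbedding T := by
  -- basis of neighborhoods of 0 in C(X, ℝ)
  have hb := nhds_basis_uniformity'
    (Metric.uniformity_basis_dist.compactConvergenceUniformity (α := X)) (x := (0 : C(X, ℝ)))
  -- pull back the unit ball
  have h0 : Metric.ball (0 : Y) 1 ∈ 𝓝 0 := Metric.ball_mem_nhds _ one_pos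
  rw [hSemb.isInducing.nhds_eq_comap, map_zero, Filter.mem_comap] at h0
  obtain ⟨V, hV, hVsub⟩ := h0
  rw [hb.mem_iff] at hV
  obtain ⟨⟨K, ε⟩, ⟨hK, hε⟩, hKV⟩ := hV
  refine ⟨K, hK, ?_⟩
  haveI : CompactSpace K := isCompact_iff_compactSpace.mp hK
  -- the restriction map composed with S
  set T : Y →L[ℝ] C(K, ℝ) :=
    { toFun := fun y => (S y).restrict K
      map_add' := fun a b => by ext x; simp
      map_smul' := fun c a => by ext x; simp
      cont := (ContinuousMap.continuous_restrict (Y := ℝ) K).comp S.continuous } with hT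
  -- key estimate: ∀ y, if sup norm on K of S y is < ε * r then ‖y‖ < r
  have key : ∀ y : Y, ‖T y‖ < ε → ‖y‖ < 1 := by
    intro y hy
    have hmem : S y ∈ V := by
      apply hKV
      intro x hx
      have : ‖T y ⟨x, hx⟩‖ ≤ ‖T y‖ := (T y).norm_coe_le_norm ⟨x, hx⟩
      have e : (T y) ⟨x, hx⟩ = S y x := rfl
      rw [e] at this
      simpa [UniformSpace.ball, Real.dist_eq, abs_sub_comm] using this.trans_lt hy
    simpa using hVsub hmem
  have key' : ∀ (y : Y) (r : ℝ), 0 < r → ‖T y‖ < ε * r → ‖y‖ < r := by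
    intro y r hr hyr
    have h1 : ‖T (r⁻¹ • y)‖ < ε := by
      rw [map_smul, norm_smul r⁻¹ (T y), norm_inv, Real.norm_eq_abs, abs_of_pos hr,
        inv_mul_lt_iff₀ hr]
      linarith [mul_comm ε r]
    have := key _ h1
    rwa [norm_smul, norm_inv, Real.norm_eq_abs, abs_of_pos hr,
      inv_mul_lt_iff₀ hr, mul_one] at this
  have hanti : ∀ y : Y, ‖y‖ ≤ ε⁻¹ * ‖T y‖ := by
    intro y
    by_contra hc
    push_neg at hc
    have hy : 0 < ‖y‖ := lt_of_le_of_lt (by positivity) hc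
    have : ‖T y‖ < ε * ‖y‖ := by
      have := (mul_lt_mul_iff_right₀ hε).mpr hc
      rwa [mul_inv_cancel_left₀ hε.ne'] at this
    exact absurd (key' y ‖y‖ hy this) (lt_irrefl _)
  have hantiL : AntilipschitzWith ⟨ε⁻¹, by positivity⟩ T := by
    refine AntilipschitzWith.of_le_mul_dist fun a b => ?_
    rw [dist_eq_norm, dist_eq_norm, ← map_sub]
    exact hanti (a - b)
  refine ⟨T, ?_, ?_⟩
  · exact hantiL.injective
  · exact (hantiL.isUniformEmbedding T.uniformContinuous).isEmbedding
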